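/- The affine surface X = {(-1 + α·2^{1/3}x₂ + α·2^{1/3}x₃)³ + 8(x₁³ + x₂³ + x₃³) = 0} ⊂ A³ over ℂ, with α = exp(iπ/3), is smooth: the gradient of the defining polynomial does not vanish at any point of X. -/
import Mathlib


open Complex

/- STATEMENT 9: The affine surface
X = {(-1 + αc·x₂ + αc·x₃)³ + 8(x₁³ + x₂³ + x₃³) = 0} ⊂ 𝔸³ over ℂ, with
α = exp(iπ/3) and c = 2^{1/3}, is smooth: the gradient
(24x₁², 3αc(-1 + αc·x₂ + αc·x₃)² + 24x₂², 3αc(-1 + αc·x₂ + αc·x₃)² + 24x₃²)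
of the defining polynomial does not vanish at any point of X. -/
theorem affine_cubic_smooth :
    ∀ x₁ x₂ x₃ : ℂ,
      (letI α : ℂ := Complex.exp (Real.pi * I / 3)
       letI c : ℂ := ((2 : ℝ) ^ ((1 : ℝ) / 3) : ℝ)
       (-1 + α * c * x₂ + α * c * x₃) ^ 3 + 8 * (x₁ ^ 3 + x₂ ^ 3 + x₃ ^ 3) = 0 →
        ¬(24 * x₁ ^ 2 = 0 ∧
          3 * (α * c) * (-1 + α * c * x₂ + α * c * x₃) ^ 2 + 24 * x₂ ^ 2 = 0 ∧
          3 * (α * c) * (-1 + α * c * x₂ + α * c * x₃) ^ 2 + 24 * x₃ ^ 2 = 0)) := by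
  intro x₁ x₂ x₃
  intro heq
  rintro ⟨h1, h2, h3⟩
  set a : ℂ := Complex.exp (Real.pi * I / 3) * ((2 : ℝ) ^ ((1 : ℝ) / 3) : ℝ) with ha
  -- x₂ = 0
  have hx2 : x₂ ^ 2 = 0 := by
    linear_combination (-(1:ℂ)/24) * ((-1 + a*x₂ + a*x₃) * h2 - 3*a*heq + a*x₁*h1 - a*x₃*(h2-h3))
  have hx2' : x₂ = 0 := by
    have := pow_eq_zero_iff (n := 2) (by norm_num) |>.mp hx2
    exact this
  have hx3 : x₃ ^ 2 = 0 := by linear_combination (1/24 : ℂ) * (h3 - h2) + hx2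
  have hx3' : x₃ = 0 := pow_eq_zero_iff (n := 2) (by norm_num) |>.mp hx3
  have hx1 : x₁ = 0 := by
    have : x₁ ^ 2 = 0 := by linear_combination (1/24 : ℂ) * h1
    exact pow_eq_zero_iff (n := 2) (by norm_num) |>.mp this
  rw [hx1, hx2', hx3'] at heq
  norm_num at heq
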